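/- Let Π_1, …, Π_k be a POVM on ℂ^d (positive semidefinite Hermitian d×d matrices with Σ_j Π_j = I). Then for every ensemble E = ((τ_i)_{i=1}^m, (p_i)_{i=1}^m), the mutual information satisfies I(E, Π) ≤ ln k − inf{ H(ρ, Π) : ρ a pure state }, where H(ρ, Π) = Σ_{j=1}^k η(Re tr(ρ Π_j)); consequently the informational power satisfies W(Π) ≤ ln k − inf{ H(ρ, Π) : ρ pure }. -/

import Mathlib

open scoped ComplexOrder
open Matrix Finset

private lemma psd_trace_re_nonneg' {n : ℕ} {M : Matrix (Fin n) (Fin n) ℂ} (h : M.PosSemidef) :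
    0 ≤ M.trace.re := by
  have hd : ∀ i, 0 ≤ M i i := fun i => by
    have := h.diag_nonneg (i := i)
    simpa [dotProduct, Pi.single_apply] using this
  rw [Matrix.trace, Complex.re_sum]
  exact Finset.sum_nonneg fun i _ => (Complex.le_def.mp (hd i)).1

private lemma psd_trace_mul_re_nonneg' {n : ℕ} {A B : Matrix (Fin n) (Fin n) ℂ}
    (hA : A.PosSemidef) (hB : B.PosSemidef) : 0 ≤ ((A * B).trace).re := by
  obtain ⟨S, hSA⟩ : ∃ S : Matrix (Fin n) (Fin n) ℂ, A = Sᴴ * S := by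
    open scoped MatrixOrder in
    exact CStarAlgebra.nonneg_iff_eq_star_mul_self.mp hA.nonneg
  have h2 : (A * B).trace = ((Sᴴ)ᴴ * B * Sᴴ).trace := by
    rw [hSA, conjTranspose_conjTranspose, mul_assoc, Matrix.trace_mul_comm]
  rw [h2]
  exact psd_trace_re_nonneg' (hB.conjTranspose_mul_mul_same Sᴴ)

private lemma entropy_le_log_card' {k : ℕ} (hk : 0 < k) (q : Fin k → ℝ)
    (hq : ∀ j, 0 ≤ q j) (hq1 : ∑ j, q j = 1) :
    ∑ j, Real.negMulLog (q j) ≤ Real.log k := by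
  have hkR : (0:ℝ) < k := Nat.cast_pos.mpr hk
  have hJ := Real.concaveOn_negMulLog.le_map_sum (t := univ)
    (w := fun _ : Fin k => (k:ℝ)⁻¹) (p := q)
    (fun i _ => by positivity)
    (by simp [Finset.card_univ]; field_simp)
    (fun i _ => hq i)
  simp only [smul_eq_mul, ← Finset.mul_sum, hq1, mul_one] at hJ
  have hval : Real.negMulLog ((k:ℝ)⁻¹) = (k:ℝ)⁻¹ * Real.log k := by
    rw [Real.negMulLog, Real.log_inv]; ring
  rw [hval] at hJ
  calc ∑ j, Real.negMulLog (q j) = (k:ℝ) * ((k:ℝ)⁻¹ * ∑ j, Real.negMulLog (q j)) := by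
        field_simp
    _ ≤ (k:ℝ) * ((k:ℝ)⁻¹ * Real.log k) := by
        apply mul_le_mul_of_nonneg_left _ hkR.le
        rwa [Finset.mul_sum] at hJ ⊢
    _ = Real.log k := by field_simp

private lemma diagonal_eq_sum_std' {n : ℕ} (f : Fin n → ℝ) :
    Matrix.diagonal (fun v => (f v : ℂ)) = ∑ v, (f v : ℂ) • Matrix.single v v 1 := by
  ext a b
  simp [Matrix.sum_apply, Matrix.diagonal_apply, Matrix.single]
  by_cases h : a = b
  · subst h; simp
  · rw [if_neg h, Finset.sum_eq_zero]
    intro x _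
    rw [if_neg (fun hh => h (hh.1.symm.trans hh.2))]

private lemma pure_decomp' {n : ℕ} {τ : Matrix (Fin n) (Fin n) ℂ} (hτ : τ.PosSemidef) :
    ∃ (lam : Fin n → ℝ) (P : Fin n → Matrix (Fin n) (Fin n) ℂ),
      (∀ v, 0 ≤ lam v) ∧
      (∀ v, (P v).IsHermitian ∧ P v * P v = P v ∧ (P v).trace = 1 ∧ (P v).PosSemidef) ∧
      τ = ∑ v, (lam v : ℂ) • P v := by
  have hH := hτ.1
  set U : Matrix (Fin n) (Fin n) ℂ := (hH.eigenvectorUnitary : Matrix (Fin n) (Fin n) ℂ) with hU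
  have hUU : U * star U = 1 := (Matrix.mem_unitaryGroup_iff).mp hH.eigenvectorUnitary.2
  have hUU' : star U * U = 1 := (Matrix.mem_unitaryGroup_iff').mp hH.eigenvectorUnitary.2
  set E : Fin n → Matrix (Fin n) (Fin n) ℂ := fun v => Matrix.single v v 1 with hE
  have hEherm : ∀ v, (E v)ᴴ = E v := by
    intro v; ext a b
    simp [hE, Matrix.single, Matrix.conjTranspose_apply, and_comm]
  have hEE : ∀ v, E v * E v = E v := by
    intro v; simp [hE, Matrix.single_mul_single_same]
  have hEtr : ∀ v, (E v).trace = 1 := by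
    intro v; simp [hE, Matrix.trace, Matrix.diag, Matrix.single]
  refine ⟨hH.eigenvalues, fun v => U * E v * star U, hτ.eigenvalues_nonneg, fun v => ?_, ?_⟩
  · refine ⟨?_, ?_, ?_, ?_⟩
    · show (U * E v * star U)ᴴ = _
      simp only [Matrix.conjTranspose_mul, Matrix.conjTranspose_conjTranspose,
        Matrix.star_eq_conjTranspose, hEherm v, mul_assoc]
    · show (U * E v * star U) * (U * E v * star U) = U * E v * star U
      simp only [mul_assoc]
      rw [← mul_assoc (star U) U, hUU', one_mul, ← mul_assoc (E v), hEE]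
    · rw [Matrix.trace_mul_comm, ← mul_assoc, hUU', one_mul, hEtr]
    · show (U * E v * star U).PosSemidef
      have heq : U * E v * star U = (U * E v) * (U * E v)ᴴ := by
        rw [Matrix.conjTranspose_mul, hEherm v, Matrix.star_eq_conjTranspose,
          ← mul_assoc, mul_assoc U (E v) (E v), hEE]
      rw [heq]
      exact Matrix.posSemidef_self_mul_conjTranspose _
  · have hst := hH.spectral_theorem
    have hdg : Matrix.diagonal (RCLike.ofReal ∘ hH.eigenvalues) =
        ∑ v, (hH.eigenvalues v : ℂ) • E v := by
      rw [show (RCLike.ofReal ∘ hH.eigenvalues : Fin n → ℂ)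
        = fun v => (hH.eigenvalues v : ℂ) from rfl]
      exact diagonal_eq_sum_std' _
    calc τ = U * (∑ v, (hH.eigenvalues v : ℂ) • E v) * star U := by rw [← hdg]; exact hst
      _ = ∑ v, (hH.eigenvalues v : ℂ) • (U * E v * star U) := by
          rw [Finset.mul_sum, Finset.sum_mul]
          exact Finset.sum_congr rfl fun v _ => by
            rw [Matrix.mul_smul, Matrix.smul_mul]

section Povm

variable {d k : ℕ} (Pov : Fin k → Matrix (Fin d) (Fin d) ℂ)

/-- measurement outcome probabilities for a density matrix -/
private lemma meas_prob' (hpos : ∀ j, (Pov j).PosSemidef) (hsum : ∑ j, Pov j = 1)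
    {ρ : Matrix (Fin d) (Fin d) ℂ} (hρ : ρ.PosSemidef) (htr : ρ.trace = 1) :
    (∀ j, 0 ≤ ((ρ * Pov j).trace).re) ∧ ∑ j, ((ρ * Pov j).trace).re = 1 := by
  have hsum1 : ∑ j, ((ρ * Pov j).trace).re = 1 := by
    have h1 : ∑ j, (ρ * Pov j).trace = 1 := by
      rw [← Matrix.trace_sum, ← Finset.mul_sum, hsum, mul_one, htr]
    rw [← Complex.re_sum, h1, Complex.one_re]
  exact ⟨fun j => psd_trace_mul_re_nonneg' hρ (hpos j), hsum1⟩

private lemma pure_posSemidef {ρ : Matrix (Fin d) (Fin d) ℂ}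
    (h : ρ.IsHermitian ∧ ρ * ρ = ρ ∧ ρ.trace = 1) : ρ.PosSemidef := by
  have : ρ = ρᴴ * ρ := by rw [h.1.eq, h.2.1]
  rw [this]
  exact Matrix.posSemidef_conjTranspose_mul_self ρ

private lemma bddBelow_S (hpos : ∀ j, (Pov j).PosSemidef) (hsum : ∑ j, Pov j = 1) :
    ∀ x ∈ {x : ℝ | ∃ ρ : Matrix (Fin d) (Fin d) ℂ,
        (ρ.IsHermitian ∧ ρ * ρ = ρ ∧ ρ.trace = 1) ∧
        x = ∑ j, Real.negMulLog (((ρ * Pov j).trace).re)}, 0 ≤ x := by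
  rintro x ⟨ρ, hρ, rfl⟩
  have hpsd := pure_posSemidef hρ
  obtain ⟨h0, h1⟩ := meas_prob' Pov hpos hsum hpsd hρ.2.2
  refine Finset.sum_nonneg fun j _ => Real.negMulLog_nonneg (h0 j) ?_
  calc ((ρ * Pov j).trace).re ≤ ∑ j', ((ρ * Pov j').trace).re :=
        Finset.single_le_sum (fun j' _ => h0 j') (Finset.mem_univ j)
    _ = 1 := h1

/-- the entropy of measurement of any density matrix dominates the infimum over pure states -/
private lemma sInf_le_H (hpos : ∀ j, (Pov j).PosSemidef) (hsum : ∑ j, Pov j = 1)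
    {τ : Matrix (Fin d) (Fin d) ℂ} (hτ : τ.PosSemidef) (htr : τ.trace = 1) :
    sInf {x : ℝ | ∃ ρ : Matrix (Fin d) (Fin d) ℂ,
        (ρ.IsHermitian ∧ ρ * ρ = ρ ∧ ρ.trace = 1) ∧
        x = ∑ j, Real.negMulLog (((ρ * Pov j).trace).re)} ≤
      ∑ j, Real.negMulLog (((τ * Pov j).trace).re) := by
  set S := {x : ℝ | ∃ ρ : Matrix (Fin d) (Fin d) ℂ,
      (ρ.IsHermitian ∧ ρ * ρ = ρ ∧ ρ.trace = 1) ∧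
      x = ∑ j, Real.negMulLog (((ρ * Pov j).trace).re)} with hSdef
  have hbdd : BddBelow S := ⟨0, fun x hx => bddBelow_S Pov hpos hsum x hx⟩
  obtain ⟨lam, P, hlam0, hP, hdecomp⟩ := pure_decomp' hτ
  set t : Fin d → Fin k → ℝ := fun v j => (((P v) * Pov j).trace).re with ht
  have ht0 : ∀ v j, 0 ≤ t v j := fun v j =>
    psd_trace_mul_re_nonneg' (hP v).2.2.2 (hpos j)
  -- trace of τ Π_j as a convex combination
  have htr_mix : ∀ j, ((τ * Pov j).trace).re = ∑ v, lam v * t v j := by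
    intro j
    rw [hdecomp, Finset.sum_mul, Matrix.trace_sum, Complex.re_sum]
    exact Finset.sum_congr rfl fun v _ => by
      rw [Matrix.smul_mul, Matrix.trace_smul, smul_eq_mul, Complex.mul_re]
      simp [ht]
  -- the weights sum to 1
  have hlam1 : ∑ v, lam v = 1 := by
    have h1 : (1 : ℂ) = ∑ v, (lam v : ℂ) := by
      rw [← htr, hdecomp, Matrix.trace_sum]
      exact Finset.sum_congr rfl fun v _ => by
        rw [Matrix.trace_smul, (hP v).2.2.1, smul_eq_mul, mul_one]
    have := congrArg Complex.re h1
    rw [Complex.one_re, Complex.re_sum] at this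
    simpa using this.symm
  -- Jensen per outcome
  have hJensen : ∀ j, ∑ v, lam v * Real.negMulLog (t v j) ≤
      Real.negMulLog (((τ * Pov j).trace).re) := by
    intro j
    rw [htr_mix j]
    have := Real.concaveOn_negMulLog.le_map_sum (t := univ)
      (w := lam) (p := fun v => t v j)
      (fun v _ => hlam0 v) (by simpa using hlam1) (fun v _ => ht0 v j)
    simpa using this
  have hstep : ∑ v, lam v * (∑ j, Real.negMulLog (t v j)) ≤
      ∑ j, Real.negMulLog (((τ * Pov j).trace).re) := by
    calc ∑ v, lam v * (∑ j, Real.negMulLog (t v j))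
        = ∑ j, ∑ v, lam v * Real.negMulLog (t v j) := by
          rw [Finset.sum_comm]
          exact Finset.sum_congr rfl fun v _ => Finset.mul_sum _ _ _
      _ ≤ ∑ j, Real.negMulLog (((τ * Pov j).trace).re) :=
          Finset.sum_le_sum fun j _ => hJensen j
  refine le_trans ?_ hstep
  have hmem : ∀ v, (∑ j, Real.negMulLog (t v j)) ∈ S := fun v =>
    ⟨P v, ⟨(hP v).1, (hP v).2.1, (hP v).2.2.1⟩, rfl⟩
  calc sInf S = ∑ v, lam v * sInf S := by rw [← Finset.sum_mul, hlam1, one_mul]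
    _ ≤ ∑ v, lam v * (∑ j, Real.negMulLog (t v j)) :=
        Finset.sum_le_sum fun v _ =>
          mul_le_mul_of_nonneg_left (csInf_le hbdd (hmem v)) (hlam0 v)

end Povm

/-- For any POVM `Π` on `ℂ^d`, the mutual information of any ensemble is bounded by
`ln k` minus the infimum of the entropy of measurement over pure states; consequently
the informational power obeys the same bound. -/
theorem stmt_6 {d k : ℕ} (hd : 0 < d) (hk : 0 < k)
    (Pov : Fin k → Matrix (Fin d) (Fin d) ℂ)
    (hpos : ∀ j, (Pov j).PosSemidef)
    (hsum : ∑ j, Pov j = 1) :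
    (∀ (m : ℕ) (τ : Fin m → Matrix (Fin d) (Fin d) ℂ) (p : Fin m → ℝ),
      (∀ i, (τ i).PosSemidef) → (∀ i, (τ i).trace = 1) →
      (∀ i, 0 ≤ p i) → ∑ i, p i = 1 →
      (∑ i, Real.negMulLog (∑ j, p i * ((τ i * Pov j).trace).re)
        + ∑ j, Real.negMulLog (∑ i, p i * ((τ i * Pov j).trace).re)
        - ∑ j, ∑ i, Real.negMulLog (p i * ((τ i * Pov j).trace).re))
      ≤ Real.log k -
        sInf {x : ℝ | ∃ ρ : Matrix (Fin d) (Fin d) ℂ,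
          (ρ.IsHermitian ∧ ρ * ρ = ρ ∧ ρ.trace = 1) ∧
          x = ∑ j, Real.negMulLog (((ρ * Pov j).trace).re)}) ∧
    sSup {x : ℝ | ∃ (m : ℕ) (τ : Fin m → Matrix (Fin d) (Fin d) ℂ) (p : Fin m → ℝ),
        (∀ i, (τ i).PosSemidef) ∧ (∀ i, (τ i).trace = 1) ∧
        (∀ i, 0 ≤ p i) ∧ ∑ i, p i = 1 ∧
        x = ∑ i, Real.negMulLog (∑ j, p i * ((τ i * Pov j).trace).re)
          + ∑ j, Real.negMulLog (∑ i, p i * ((τ i * Pov j).trace).re)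
          - ∑ j, ∑ i, Real.negMulLog (p i * ((τ i * Pov j).trace).re)}
      ≤ Real.log k -
        sInf {x : ℝ | ∃ ρ : Matrix (Fin d) (Fin d) ℂ,
          (ρ.IsHermitian ∧ ρ * ρ = ρ ∧ ρ.trace = 1) ∧
          x = ∑ j, Real.negMulLog (((ρ * Pov j).trace).re)} := by
  set S := {x : ℝ | ∃ ρ : Matrix (Fin d) (Fin d) ℂ,
      (ρ.IsHermitian ∧ ρ * ρ = ρ ∧ ρ.trace = 1) ∧
      x = ∑ j, Real.negMulLog (((ρ * Pov j).trace).re)} with hSdef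
  have key : ∀ (m : ℕ) (τ : Fin m → Matrix (Fin d) (Fin d) ℂ) (p : Fin m → ℝ),
      (∀ i, (τ i).PosSemidef) → (∀ i, (τ i).trace = 1) →
      (∀ i, 0 ≤ p i) → ∑ i, p i = 1 →
      (∑ i, Real.negMulLog (∑ j, p i * ((τ i * Pov j).trace).re)
        + ∑ j, Real.negMulLog (∑ i, p i * ((τ i * Pov j).trace).re)
        - ∑ j, ∑ i, Real.negMulLog (p i * ((τ i * Pov j).trace).re))
      ≤ Real.log k - sInf S := by
    intro m τ p hτpos hτtr hp hp1
    set r : Fin m → Fin k → ℝ := fun i j => ((τ i * Pov j).trace).re with hr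
    have hr0 : ∀ i j, 0 ≤ r i j := fun i j =>
      psd_trace_mul_re_nonneg' (hτpos i) (hpos j)
    have hr1 : ∀ i, ∑ j, r i j = 1 := fun i =>
      (meas_prob' Pov hpos hsum (hτpos i) (hτtr i)).2
    -- first term
    have hterm1 : ∀ i, (∑ j, p i * r i j) = p i := by
      intro i; rw [← Finset.mul_sum, hr1 i, mul_one]
    -- cross term
    have hcross : ∑ j, ∑ i, Real.negMulLog (p i * r i j)
        = ∑ i, Real.negMulLog (p i) + ∑ i, p i * (∑ j, Real.negMulLog (r i j)) := by
      rw [Finset.sum_comm, ← Finset.sum_add_distrib]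
      refine Finset.sum_congr rfl fun i _ => ?_
      calc ∑ j, Real.negMulLog (p i * r i j)
          = ∑ j, (r i j * Real.negMulLog (p i) + p i * Real.negMulLog (r i j)) := by
            exact Finset.sum_congr rfl fun j _ => Real.negMulLog_mul _ _
        _ = (∑ j, r i j) * Real.negMulLog (p i) + p i * ∑ j, Real.negMulLog (r i j) := by
            rw [Finset.sum_add_distrib, ← Finset.sum_mul, ← Finset.mul_sum]
        _ = Real.negMulLog (p i) + p i * ∑ j, Real.negMulLog (r i j) := by
            rw [hr1 i, one_mul]
    -- second term bound
    have hterm2 : ∑ j, Real.negMulLog (∑ i, p i * r i j) ≤ Real.log k := by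
      refine entropy_le_log_card' hk _ (fun j => Finset.sum_nonneg fun i _ =>
        mul_nonneg (hp i) (hr0 i j)) ?_
      rw [Finset.sum_comm]
      calc ∑ i, ∑ j, p i * r i j = ∑ i, p i := Finset.sum_congr rfl fun i _ => hterm1 i
        _ = 1 := hp1
    -- average entropy bound
    have hav : sInf S ≤ ∑ i, p i * (∑ j, Real.negMulLog (r i j)) := by
      calc sInf S = ∑ i, p i * sInf S := by rw [← Finset.sum_mul, hp1, one_mul]
        _ ≤ ∑ i, p i * (∑ j, Real.negMulLog (r i j)) :=
            Finset.sum_le_sum fun i _ => mul_le_mul_of_nonneg_left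
              (sInf_le_H Pov hpos hsum (hτpos i) (hτtr i)) (hp i)
    have hterm1' : ∑ i, Real.negMulLog (∑ j, p i * r i j) = ∑ i, Real.negMulLog (p i) :=
      Finset.sum_congr rfl fun i _ => by rw [hterm1 i]
    rw [hterm1', hcross]
    linarith [hterm2, hav]
  refine ⟨key, ?_⟩
  -- a pure state exists since d > 0
  have hρ0 : ∃ ρ : Matrix (Fin d) (Fin d) ℂ, ρ.IsHermitian ∧ ρ * ρ = ρ ∧ ρ.trace = 1 := by
    refine ⟨Matrix.single ⟨0, hd⟩ ⟨0, hd⟩ 1, ?_, ?_, ?_⟩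
    · show _ᴴ = _
      ext a b
      simp [Matrix.single, Matrix.conjTranspose_apply, and_comm]
    · simp [Matrix.single_mul_single_same]
    · simp [Matrix.trace, Matrix.diag, Matrix.single]
  obtain ⟨ρ0, hρ0h⟩ := hρ0
  have hρ0psd := pure_posSemidef hρ0h
  have hmem0 : (∑ j, Real.negMulLog (((ρ0 * Pov j).trace).re)) ∈ S := ⟨ρ0, hρ0h, rfl⟩
  have hbdd : BddBelow S := ⟨0, fun x hx => bddBelow_S Pov hpos hsum x hx⟩
  have hinf_le : sInf S ≤ Real.log k := by
    refine le_trans (csInf_le hbdd hmem0) ?_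
    obtain ⟨h0, h1⟩ := meas_prob' Pov hpos hsum hρ0psd hρ0h.2.2
    exact entropy_le_log_card' hk _ h0 h1
  refine Real.sSup_le ?_ (by linarith)
  rintro x ⟨m, τ, p, h1, h2, h3, h4, rfl⟩
  exact key m τ p h1 h2 h3 h4
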